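/- For 0 < ξ < 1 and a positive integer m, suppose that for all integers l with l ≠ 0 and l ≠ m the identity (l² − m²)/l² = (1 − ξ^{l+m})(1 − ξ^{l−m})/(1 − ξ^l)² holds. Then this leads to a contradiction; i.e., there is no ξ ∈ (0,1) and positive integer m for which this identity holds for all such l. -/

import Mathlib

/-- There is no `ξ ∈ (0,1)` and positive integer `m` such that
`(l² − m²)/l² = (1 − ξ^{l+m})(1 − ξ^{l−m})/(1 − ξ^l)²` for all integers
`l ∉ {0, m}`. -/
theorem hankel_stmt4 (ξ : ℝ) (hξ0 : 0 < ξ) (hξ1 : ξ < 1) (m : ℤ) (hm : 1 ≤ m)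
    (h : ∀ l : ℤ, l ≠ 0 → l ≠ m →
      ((l : ℝ) ^ 2 - (m : ℝ) ^ 2) / (l : ℝ) ^ 2 =
        (1 - ξ ^ (l + m)) * (1 - ξ ^ (l - m)) / (1 - ξ ^ l) ^ 2) :
    False := by
  have hm0 : (0:ℝ) < (m:ℝ) := by exact_mod_cast hm
  have hxpos : ∀ l : ℤ, 0 < ξ ^ l := fun l => zpow_pos hξ0 l
  have hxlt : ∀ l : ℤ, 0 < l → ξ ^ l < 1 := fun l hl => zpow_lt_one₀ hξ0 hξ1 hl
  -- the sequence a n = (1 - ξ^(n m)) / (n m)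
  set a : ℕ → ℝ := fun n => (1 - ξ ^ ((n:ℤ)*m)) / ((n:ℝ)*(m:ℝ)) with ha
  have hapos : ∀ n : ℕ, 1 ≤ n → 0 < a n := by
    intro n hn
    have hn0 : (0:ℝ) < (n:ℝ) := by exact_mod_cast hn
    have : 0 < (n:ℤ)*m := mul_pos (by exact_mod_cast hn) (by linarith)
    exact div_pos (by linarith [hxlt _ this]) (by positivity)
  -- the recurrence a (k+3) * a (k+1) = a (k+2) ^ 2
  have hrec : ∀ k : ℕ, a (k+3) * a (k+1) = a (k+2) ^ 2 := by
    intro k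
    have hl0 : ((k:ℤ)+2)*m ≠ 0 := by positivity
    have hlm : ((k:ℤ)+2)*m ≠ m := by
      intro hcontra
      have : ((k:ℤ)+1)*m = 0 := by ring_nf; ring_nf at hcontra; omega
      have : (0:ℤ) < ((k:ℤ)+1)*m := by positivity
      omega
    have h' := h (((k:ℤ)+2)*m) hl0 hlm
    have e1 : ((k:ℤ)+2)*m + m = ((k:ℤ)+3)*m := by ring
    have e2 : ((k:ℤ)+2)*m - m = ((k:ℤ)+1)*m := by ring
    rw [e1, e2] at h'
    push_cast at h'
    have hD : (1 - ξ ^ (((k:ℤ)+2)*m)) ≠ 0 := by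
      have := hxlt (((k:ℤ)+2)*m) (by positivity); linarith
    have hx2 : (((k:ℝ)+2)*(m:ℝ)) ≠ 0 := by positivity
    -- cross multiply h'
    rw [div_eq_div_iff (by positivity) (by positivity)] at h'
    simp only [ha]
    push_cast
    rw [div_mul_div_comm, div_pow, div_eq_div_iff (by positivity) (by positivity)]
    ring_nf
    ring_nf at h'
    linarith [h']
  have ha2 : 0 < a 2 := hapos 2 (by norm_num)
  have ha3 : 0 < a 3 := hapos 3 (by norm_num)
  set r : ℝ := a 3 / a 2 with hr
  have hr0 : 0 < r := div_pos ha3 ha2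
  -- constant ratio
  have hQ : ∀ k : ℕ, a (k+3) * a 2 = a (k+2) * a 3 := by
    intro k
    induction k with
    | zero => ring
    | succ n ih =>
      have hpos : a (n+2) ≠ 0 := ne_of_gt (hapos (n+2) (by omega))
      have hrec' := hrec (n+1)
      have : a (n+4) * a 2 * a (n+2) = a (n+3) * a 3 * a (n+2) := by
        linear_combination a 2 * hrec' + a (n+3) * ih
      have := mul_right_cancel₀ hpos this
      simpa [show n+1+3 = n+4 from rfl, show n+1+2 = n+3 from rfl] using this
  -- geometric formula
  have hgeo : ∀ k : ℕ, a (k+2) = a 2 * r ^ k := by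
    intro k
    induction k with
    | zero => simp
    | succ n ih =>
      have h1 := hQ n
      have : a (n+3) = a (n+2) * r := by
        field_simp [hr] at h1 ⊢
        rw [hr, mul_div_assoc', eq_div_iff (ne_of_gt ha2)]; linarith [h1]
      rw [show n+1+2 = n+3 from rfl, this, ih]; ring
  -- key identity
  have hkey : ∀ k : ℕ, 1 - ξ ^ (((k:ℤ)+2)*m) = ((k:ℝ)+2)*(m:ℝ) * (a 2 * r ^ k) := by
    intro k
    have hd := hgeo k
    have hne : (((k:ℝ)+2)*(m:ℝ)) ≠ 0 := by positivity
    have he : a (k+2) = (1 - ξ ^ (((k:ℤ)+2)*m)) / (((k:ℝ)+2)*(m:ℝ)) := by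
      simp only [ha]; push_cast; ring
    rw [he, div_eq_iff hne] at hd
    rw [hd]; ring
  -- bounds
  have hub : ∀ k : ℕ, ((k:ℝ)+2)*(m:ℝ) * (a 2 * r ^ k) < 1 := by
    intro k
    rw [← hkey k]
    have := hxpos (((k:ℤ)+2)*m)
    linarith
  have hlb : ∀ k : ℕ, 1 - ξ ^ (2*m) ≤ ((k:ℝ)+2)*(m:ℝ) * (a 2 * r ^ k) := by
    intro k
    rw [← hkey k]
    have : ξ ^ (((k:ℤ)+2)*m) ≤ ξ ^ (2*m) := by
      apply zpow_le_zpow_right_of_le_one₀ hξ0 hξ1.le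
      nlinarith [Int.ofNat_nonneg k]
    linarith
  have hc2 : 0 < 1 - ξ ^ (2*m) := by
    have := hxlt (2*m) (by omega); linarith
  rcases le_or_gt 1 r with hge | hlt
  · -- r ≥ 1 : pick k large with (k+2) m a2 > 1
    obtain ⟨k, hk⟩ := exists_nat_gt (1 / ((m:ℝ) * a 2))
    have hrk : (1:ℝ) ≤ r ^ k := one_le_pow₀ hge
    have h1 : 1 < ((k:ℝ)+2)*(m:ℝ) * a 2 := by
      have hma : 0 < (m:ℝ) * a 2 := by positivity
      rw [div_lt_iff₀ hma] at hk
      nlinarith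
    have := hub k
    nlinarith
  · -- r < 1 : (k+2) m a2 r^k → 0
    have htend : Filter.Tendsto (fun k : ℕ => ((k:ℝ)+2)*(m:ℝ) * (a 2 * r ^ k))
        Filter.atTop (nhds 0) := by
      have h1 := (tendsto_self_mul_const_pow_of_lt_one hr0.le hlt).const_mul ((m:ℝ) * a 2)
      have h2 := (tendsto_pow_atTop_nhds_zero_of_lt_one hr0.le hlt).const_mul (2*(m:ℝ) * a 2)
      have := h1.add h2
      simp only [mul_zero, add_zero] at this
      convert this using 2 with k
      ring
    have := (htend.eventually (gt_mem_nhds hc2)).exists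
    obtain ⟨k, hk⟩ := this
    exact absurd (hlb k) (not_le.mpr hk)
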